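/- For the 3-sun graph $S$ (of order 6), $rx_3(S) = 4$. -/

import Mathlib

open SimpleGraph

/-- An edge-coloring `c` is a `k`-rainbow coloring of `G` if every `k`-set of vertices
is contained in a rainbow tree: a subgraph of `G` that is a tree, contains the `k` vertices,
and whose edges receive pairwise distinct colors. -/
def IsRainbowColoring {V : Type*} [Fintype V] (G : SimpleGraph V) {α : Type*}
    (c : Sym2 V → α) (k : ℕ) : Prop :=
  ∀ S : Finset V, S.card = k →
    ∃ T : G.Subgraph, (↑S : Set V) ⊆ T.verts ∧ T.coe.IsTree ∧ Set.InjOn c T.edgeSet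

/-- The `k`-rainbow index of `G`: the minimum number of colors in a `k`-rainbow coloring. -/
noncomputable def rxk {V : Type*} [Fintype V] (G : SimpleGraph V) (k : ℕ) : ℕ :=
  sInf {q | ∃ c : Sym2 V → Fin q, IsRainbowColoring G c k}

/-- The 3-sun: a 6-cycle `0 1 2 3 4 5 0` together with the triangle `1 3 5`. -/
def threeSun : SimpleGraph (Fin 6) :=
  SimpleGraph.fromEdgeSet
    {s(0, 1), s(1, 2), s(2, 3), s(3, 4), s(4, 5), s(5, 0), s(1, 3), s(3, 5), s(5, 1)}

def sunEdges : Finset (Sym2 (Fin 6)) :=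
  {s(0, 1), s(1, 2), s(2, 3), s(3, 4), s(4, 5), s(5, 0), s(1, 3), s(3, 5), s(5, 1)}

lemma threeSun_adj (a b : Fin 6) : threeSun.Adj a b ↔ s(a, b) ∈ sunEdges ∧ a ≠ b := by
  rw [threeSun, fromEdgeSet_adj]
  simp [sunEdges]

instance : DecidableRel threeSun.Adj := fun a b =>
  decidable_of_iff _ (threeSun_adj a b).symm

instance {V : Type*} [DecidableEq V] {l : List (Sym2 V)} :
    DecidableRel (fromEdgeSet {e | e ∈ l}).Adj := fun a b =>
  decidable_of_iff (s(a, b) ∈ l ∧ a ≠ b) (by rw [fromEdgeSet_adj]; exact Iff.rfl)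

instance {V : Type*} [DecidableEq V] {x : Sym2 V} :
    DecidableRel (fromEdgeSet {x}).Adj := fun a b =>
  decidable_of_iff (s(a, b) = x ∧ a ≠ b) (by rw [fromEdgeSet_adj]; exact Iff.rfl)

lemma isAcyclic_of_check {V : Type*} [Fintype V] (G : SimpleGraph V)
    (h : ∀ a b, G.Adj a b → ¬ (G \ fromEdgeSet {s(a, b)}).Reachable a b) : G.IsAcyclic := by
  rw [isAcyclic_iff_forall_adj_isBridge]
  intro v w hvw
  rw [isBridge_iff]
  exact h v w hvw

lemma coe_acyclic_of {V : Type*} {G : SimpleGraph V} (T : G.Subgraph)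
    (h : (fromEdgeSet T.edgeSet).IsAcyclic) : T.coe.IsAcyclic := by
  intro v c hc
  let f : T.coe →g fromEdgeSet T.edgeSet :=
    ⟨Subtype.val, fun hadj =>
      (fromEdgeSet_adj _).mpr ⟨Subgraph.mem_edgeSet.mpr hadj, Subgraph.Adj.ne hadj⟩⟩
  exact h (c.map f) (hc.map Subtype.val_injective)

lemma walk_tree {u v : Fin 6} (p : threeSun.Walk u v)
    (hacy : (fromEdgeSet {e | e ∈ p.edges} : SimpleGraph (Fin 6)).IsAcyclic) :
    p.toSubgraph.coe.IsTree :=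
  ⟨(p.toSubgraph_connected).coe, coe_acyclic_of _ (by rwa [Walk.edgeSet_toSubgraph])⟩

lemma injOn_list {α β : Type*} {c : α → β} {l : List α}
    (h : ∀ a ∈ l, ∀ b ∈ l, c a = c b → a = b) : Set.InjOn c {e | e ∈ l} :=
  fun a ha b hb => h a ha b hb

lemma verts_sub (S : Finset (Fin 6)) {u v : Fin 6} (p : threeSun.Walk u v)
    (h : ∀ x ∈ S, x ∈ p.support) : (↑S : Set (Fin 6)) ⊆ p.toSubgraph.verts :=
  fun x hx => (Walk.mem_verts_toSubgraph _).mpr (h x hx)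

/-- The rainbow coloring with 4 colors. -/
def c4 (e : Sym2 (Fin 6)) : Fin 4 :=
  if e = s(4, 5) ∨ e = s(1, 3) then 1
  else if e = s(0, 5) ∨ e = s(3, 5) then 2
  else if e = s(1, 5) then 3
  else 0

def w1 : threeSun.Walk 0 4 :=
  Walk.cons (show threeSun.Adj 0 1 by decide) (Walk.cons (show threeSun.Adj 1 5 by decide) (Walk.cons (show threeSun.Adj 5 3 by decide) (Walk.cons (show threeSun.Adj 3 5 by decide) (Walk.cons (show threeSun.Adj 5 4 by decide) (Walk.nil)))))

lemma w1_tree : w1.toSubgraph.coe.IsTree :=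
  walk_tree _ (isAcyclic_of_check _ (by decide))

lemma w1_inj : Set.InjOn c4 w1.toSubgraph.edgeSet := by
  rw [Walk.edgeSet_toSubgraph]
  exact injOn_list (by decide)

def w2 : threeSun.Walk 0 4 :=
  Walk.cons (show threeSun.Adj 0 5 by decide) (Walk.cons (show threeSun.Adj 5 1 by decide) (Walk.cons (show threeSun.Adj 1 2 by decide) (Walk.cons (show threeSun.Adj 2 1 by decide) (Walk.cons (show threeSun.Adj 1 5 by decide) (Walk.cons (show threeSun.Adj 5 4 by decide) (Walk.nil))))))

lemma w2_tree : w2.toSubgraph.coe.IsTree :=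
  walk_tree _ (isAcyclic_of_check _ (by decide))

lemma w2_inj : Set.InjOn c4 w2.toSubgraph.edgeSet := by
  rw [Walk.edgeSet_toSubgraph]
  exact injOn_list (by decide)

def w3 : threeSun.Walk 0 3 :=
  Walk.cons (show threeSun.Adj 0 5 by decide) (Walk.cons (show threeSun.Adj 5 1 by decide) (Walk.cons (show threeSun.Adj 1 2 by decide) (Walk.cons (show threeSun.Adj 2 1 by decide) (Walk.cons (show threeSun.Adj 1 3 by decide) (Walk.nil)))))

lemma w3_tree : w3.toSubgraph.coe.IsTree :=
  walk_tree _ (isAcyclic_of_check _ (by decide))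

lemma w3_inj : Set.InjOn c4 w3.toSubgraph.edgeSet := by
  rw [Walk.edgeSet_toSubgraph]
  exact injOn_list (by decide)

def w4 : threeSun.Walk 2 4 :=
  Walk.cons (show threeSun.Adj 2 3 by decide) (Walk.cons (show threeSun.Adj 3 5 by decide) (Walk.cons (show threeSun.Adj 5 4 by decide) (Walk.nil)))

lemma w4_tree : w4.toSubgraph.coe.IsTree :=
  walk_tree _ (isAcyclic_of_check _ (by decide))

lemma w4_inj : Set.InjOn c4 w4.toSubgraph.edgeSet := by
  rw [Walk.edgeSet_toSubgraph]
  exact injOn_list (by decide)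

lemma rainbow4 : IsRainbowColoring threeSun c4 3 := by
  intro S hS
  have hcases : ∀ S : Finset (Fin 6), S.card = 3 → (S = {0, 1, 2} ∨ S = {0, 1, 3} ∨ S = {0, 1, 4} ∨ S = {0, 1, 5} ∨ S = {0, 2, 3} ∨ S = {0, 2, 4} ∨ S = {0, 2, 5} ∨ S = {0, 3, 4} ∨ S = {0, 3, 5} ∨ S = {0, 4, 5} ∨ S = {1, 2, 3} ∨ S = {1, 2, 4} ∨ S = {1, 2, 5} ∨ S = {1, 3, 4} ∨ S = {1, 3, 5} ∨ S = {1, 4, 5} ∨ S = {2, 3, 4} ∨ S = {2, 3, 5} ∨ S = {2, 4, 5} ∨ S = {3, 4, 5}) := by decide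
  rcases hcases S hS with rfl|rfl|rfl|rfl|rfl|rfl|rfl|rfl|rfl|rfl|rfl|rfl|rfl|rfl|rfl|rfl|rfl|rfl|rfl|rfl <;>
  first
    | exact ⟨w1.toSubgraph, verts_sub _ _ (by decide), w1_tree, w1_inj⟩
    | exact ⟨w2.toSubgraph, verts_sub _ _ (by decide), w2_tree, w2_inj⟩
    | exact ⟨w3.toSubgraph, verts_sub _ _ (by decide), w3_tree, w3_inj⟩
    | exact ⟨w4.toSubgraph, verts_sub _ _ (by decide), w4_tree, w4_inj⟩

lemma adj0 : ∀ z : Fin 6, threeSun.Adj 0 z → z = 1 ∨ z = 5 := by decide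
lemma adj2 : ∀ z : Fin 6, threeSun.Adj 2 z → z = 1 ∨ z = 3 := by decide
lemma adj4 : ∀ z : Fin 6, threeSun.Adj 4 z → z = 3 ∨ z = 5 := by decide

lemma exists_nbr {T : threeSun.Subgraph} (hconn : T.coe.Connected)
    {x y : Fin 6} (hx : x ∈ T.verts) (hy : y ∈ T.verts) (hxy : x ≠ y) :
    ∃ z : Fin 6, z ∈ T.verts ∧ T.Adj x z := by
  obtain ⟨w⟩ := hconn ⟨x, hx⟩ ⟨y, hy⟩
  cases w with
  | nil => exact absurd rfl hxy
  | cons h p => exact ⟨_, (h.snd_mem : _), h⟩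

lemma lower_bound (q : ℕ) (h : ∃ c : Sym2 (Fin 6) → Fin q, IsRainbowColoring threeSun c 3) :
    4 ≤ q := by
  classical
  obtain ⟨c, hc⟩ := h
  by_contra hlt
  push_neg at hlt
  obtain ⟨T, hsub, htree, hinj⟩ := hc {0, 2, 4} (by decide)
  have h0 : (0 : Fin 6) ∈ T.verts := hsub (by simp)
  have h2 : (2 : Fin 6) ∈ T.verts := hsub (by simp)
  have h4 : (4 : Fin 6) ∈ T.verts := hsub (by simp)
  letI : Fintype ↥T.verts := Fintype.ofFinite _
  letI : Fintype ↥(T.coe.edgeSet) := Fintype.ofFinite _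
  -- counting
  have hcard : Fintype.card ↥T.verts ≤ 4 := by
    have e1 : T.coe.edgeFinset.card + 1 = Fintype.card ↥T.verts := htree.card_edgeFinset
    have e2 : T.coe.edgeFinset.card = T.coe.edgeSet.ncard := by
      simp [Set.ncard_eq_toFinset_card', edgeFinset]
    have e3 : T.coe.edgeSet.ncard = T.edgeSet.ncard := by
      rw [← T.image_coe_edgeSet_coe]
      exact (Set.ncard_image_of_injective _ (Sym2.map.injective Subtype.val_injective)).symm
    have e4 : T.edgeSet.ncard ≤ q := by
      have hfin : T.edgeSet.Finite := Set.toFinite _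
      have hle : Nat.card ↥(T.edgeSet) ≤ Nat.card (Fin q) := by
        apply Nat.card_le_card_of_injective (fun e => c e.1)
        intro a b hab
        exact Subtype.ext (hinj a.2 b.2 hab)
      have he1 : Nat.card ↥(T.edgeSet) = T.edgeSet.ncard := Nat.card_coe_set_eq _
      have he2 : Nat.card (Fin q) = q := Nat.card_eq_fintype_card.trans (Fintype.card_fin q)
      omega
    omega
  -- neighbors
  obtain ⟨z0, hz0v, hz0⟩ := exists_nbr htree.isConnected h0 h2 (by decide)
  obtain ⟨z2, hz2v, hz2⟩ := exists_nbr htree.isConnected h2 h0 (by decide)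
  obtain ⟨z4, hz4v, hz4⟩ := exists_nbr htree.isConnected h4 h0 (by decide)
  have hz0' := adj0 z0 (T.adj_sub hz0)
  have hz2' := adj2 z2 (T.adj_sub hz2)
  have hz4' := adj4 z4 (T.adj_sub hz4)
  have hsub5 : ({0, 2, 4, z0, z2, z4} : Finset (Fin 6)) ⊆ T.verts.toFinset := by
    intro x hx
    rw [Set.mem_toFinset]
    simp only [Finset.mem_insert, Finset.mem_singleton] at hx
    rcases hx with rfl | rfl | rfl | rfl | rfl | rfl <;> assumption
  have hc5 : 5 ≤ ({0, 2, 4, z0, z2, z4} : Finset (Fin 6)).card := by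
    rcases hz0' with rfl | rfl <;> rcases hz2' with rfl | rfl <;>
      rcases hz4' with rfl | rfl <;> decide
  have := Finset.card_le_card hsub5
  rw [Set.toFinset_card] at this
  omega

theorem stmt_17 : rxk threeSun 3 = 4 := by
  have h4 : 4 ∈ {q | ∃ c : Sym2 (Fin 6) → Fin q, IsRainbowColoring threeSun c 3} :=
    ⟨c4, rainbow4⟩
  rw [rxk]
  refine le_antisymm (Nat.sInf_le h4) (le_csInf ⟨4, h4⟩ ?_)
  exact fun b hb => lower_bound b hb
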